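/- Let d ≥ 1 be an integer, n a prime with n > d+1, and c an element of the field F_n with c ≠ 1 and c ≠ −d (as elements of F_n). Then the number of d-faces of the complex X_{d,n,c}, i.e., the number of (d+1)-element subsets {x_0, x_1, …, x_d} of F_n admitting an ordering of their elements such that c·x_d + Σ_{j=0}^{d−1} x_j = 0 in F_n, equals the binomial coefficient C(n−1, d). -/

import Mathlib

/-- Let `d ≥ 1`, `n` a prime with `n > d + 1`, and `c ∈ F_n` with
`c ≠ 1` and `c ≠ -d`. The number of `(d+1)`-element subsets `{x₀, …, x_d}` of `F_n`
admitting an ordering with `c·x_d + Σ_{j<d} x_j = 0` equals `C(n-1, d)`. -/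
theorem numFaces_eq_choose (d n : ℕ) [NeZero n] (hd : 1 ≤ d) (hn : n.Prime)
    (hnd : d + 1 < n) (c : ZMod n) (hc1 : c ≠ 1) (hcd : c ≠ -(d : ZMod n)) :
    (Finset.univ.filter fun s : Finset (ZMod n) =>
        s.card = d + 1 ∧ ∃ x ∈ s, c * x + ∑ y ∈ s.erase x, y = 0).card
      = Nat.choose (n - 1) d := by
  classical
  haveI : Fact n.Prime := ⟨hn⟩
  have h1c : (1 : ZMod n) - c ≠ 0 := sub_ne_zero.mpr (Ne.symm hc1)
  have hk : c + (d : ZMod n) ≠ 0 := fun h => hcd (eq_neg_of_add_eq_zero_left h)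
  set x₀ : Finset (ZMod n) → ZMod n := fun s => (1 - c)⁻¹ * ∑ y ∈ s, y with hx₀def
  have hx₀ : ∀ s : Finset (ZMod n), (1 - c) * x₀ s = ∑ y ∈ s, y := by
    intro s; rw [hx₀def]; field_simp
  set a : Finset (ZMod n) → ZMod n := fun t => -((c + d)⁻¹ * ∑ y ∈ t, y) with hadef
  have ha : ∀ t : Finset (ZMod n), (c + d) * a t = -∑ y ∈ t, y := by
    intro t; rw [hadef]; field_simp
  -- key characterization of the witness x
  have key : ∀ (s : Finset (ZMod n)) (x : ZMod n), x ∈ s →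
      (c * x + ∑ y ∈ s.erase x, y = 0 ↔ x = x₀ s) := by
    intro s x hx
    rw [Finset.sum_erase_eq_sub hx]
    constructor
    · intro h
      have h2 : (1 - c) * x = ∑ y ∈ s, y := by linear_combination -h
      have := hx₀ s
      rw [hx₀def]
      field_simp
      linear_combination h2
    · intro h
      subst h
      have := hx₀ s
      linear_combination -this
  -- sums over shifted images
  have sum_shift : ∀ (A : Finset (ZMod n)) (b : ZMod n),
      ∑ y ∈ A.image (fun y => y + b), y = (∑ y ∈ A, y) + A.card • b := by
    intro A b
    rw [Finset.sum_image (fun x _ y _ h => by simpa using h)]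
    simp [Finset.sum_add_distrib]
  -- the target set
  have hT : (Finset.univ.filter fun t : Finset (ZMod n) =>
      t.card = d ∧ (0 : ZMod n) ∉ t).card = Nat.choose (n - 1) d := by
    have he : (Finset.univ.filter fun t : Finset (ZMod n) =>
        t.card = d ∧ (0 : ZMod n) ∉ t) =
        (Finset.univ.erase (0 : ZMod n)).powersetCard d := by
      ext t
      simp only [Finset.mem_filter, Finset.mem_univ, true_and,
        Finset.mem_powersetCard, Finset.subset_erase]
      exact ⟨fun h => ⟨⟨t.subset_univ, h.2⟩, h.1⟩, fun h => ⟨h.2, h.1.2⟩⟩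
    rw [he, Finset.card_powersetCard, Finset.card_erase_of_mem (Finset.mem_univ _),
      Finset.card_univ, ZMod.card]
  rw [← hT]
  refine Finset.card_bij'
    (fun s _ => (s.erase (x₀ s)).image (fun y => y - x₀ s))
    (fun t _ => insert (a t) (t.image (fun y => y + a t))) ?_ ?_ ?_ ?_
  · -- forward maps into target
    intro s hs
    simp only [Finset.mem_filter, Finset.mem_univ, true_and] at hs ⊢
    obtain ⟨hcard, x, hx, hcond⟩ := hs
    have hx0 : x₀ s ∈ s := by rw [← (key s x hx).mp hcond]; exact hx
    constructor
    · rw [Finset.card_image_of_injective _ (sub_left_injective),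
        Finset.card_erase_of_mem hx0, hcard]
      rfl
    · intro h0
      obtain ⟨y, hy, hy0⟩ := Finset.mem_image.mp h0
      rw [sub_eq_zero] at hy0
      exact (Finset.mem_erase.mp hy).1 hy0
  · -- backward maps into source
    intro t ht
    simp only [Finset.mem_filter, Finset.mem_univ, true_and] at ht ⊢
    obtain ⟨hcard, h0⟩ := ht
    have hnotmem : a t ∉ t.image (fun y => y + a t) := by
      intro h
      obtain ⟨y, hy, hy0⟩ := Finset.mem_image.mp h
      have : y = 0 := by linear_combination hy0
      exact h0 (this ▸ hy)
    have hsumB : ∑ y ∈ t.image (fun y => y + a t), y = -(c * a t) := by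
      rw [sum_shift, hcard]
      push_cast
      simp only [hadef]
      linear_combination (-∑ y ∈ t, y) * mul_inv_cancel₀ hk
    refine ⟨?_, a t, Finset.mem_insert_self _ _, ?_⟩
    · rw [Finset.card_insert_of_notMem hnotmem,
        Finset.card_image_of_injective _ (add_left_injective _), hcard]
    · rw [Finset.erase_insert hnotmem, hsumB]
      ring
  · -- left inverse
    intro s hs
    simp only [Finset.mem_filter, Finset.mem_univ, true_and] at hs
    obtain ⟨hcard, x, hx, hcond⟩ := hs
    have hx0 : x₀ s ∈ s := by rw [← (key s x hx).mp hcond]; exact hx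
    have himg : (s.erase (x₀ s)).image (fun y => y - x₀ s) =
        (s.erase (x₀ s)).image (fun y => y + -(x₀ s)) := by
      simp [sub_eq_add_neg]
    have hcerase : (s.erase (x₀ s)).card = d := by
      rw [Finset.card_erase_of_mem hx0, hcard]
      omega
    have hsum : ∑ y ∈ (s.erase (x₀ s)).image (fun y => y - x₀ s), y
        = -((c + d) * x₀ s) := by
      rw [himg, sum_shift, Finset.sum_erase_eq_sub hx0, hcerase]
      push_cast
      simp only [hx₀def]
      linear_combination (-∑ y ∈ s, y) * mul_inv_cancel₀ h1c
    have haeq : a ((s.erase (x₀ s)).image (fun y => y - x₀ s)) = x₀ s := by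
      simp only [hadef]
      rw [hsum]
      simp only [hx₀def]
      linear_combination ((1 - c)⁻¹ * ∑ y ∈ s, y) * mul_inv_cancel₀ hk
    beta_reduce
    rw [haeq, Finset.image_image]
    have : ((fun y => y + x₀ s) ∘ fun y => y - x₀ s) = id := by
      funext y; simp
    rw [this, Finset.image_id, Finset.insert_erase hx0]
  · -- right inverse
    intro t ht
    simp only [Finset.mem_filter, Finset.mem_univ, true_and] at ht
    obtain ⟨hcard, h0⟩ := ht
    have hnotmem : a t ∉ t.image (fun y => y + a t) := by
      intro h
      obtain ⟨y, hy, hy0⟩ := Finset.mem_image.mp h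
      have : y = 0 := by linear_combination hy0
      exact h0 (this ▸ hy)
    have hsumB : ∑ y ∈ t.image (fun y => y + a t), y = -(c * a t) := by
      rw [sum_shift, hcard]
      push_cast
      simp only [hadef]
      linear_combination (-∑ y ∈ t, y) * mul_inv_cancel₀ hk
    have hsumS : ∑ y ∈ insert (a t) (t.image (fun y => y + a t)), y
        = (1 - c) * a t := by
      rw [Finset.sum_insert hnotmem, hsumB]; ring
    have hx0eq : x₀ (insert (a t) (t.image (fun y => y + a t))) = a t := by
      simp only [hx₀def, hsumS]
      field_simp
    beta_reduce
    rw [hx0eq, Finset.erase_insert hnotmem, Finset.image_image]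
    have : ((fun y => y - a t) ∘ fun y => y + a t) = id := by
      funext y; simp
    rw [this, Finset.image_id]
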